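/- Let C be a code over an alphabet A, and let Z_n, Q_n (n ≥ 1) be defined by the Lazard right length recurrence. Then every element w of C* admits a unique factorization w = u_1·u_2⋯u_r (r ≥ 0) such that each u_t belongs to ⋃_n Q_n and the lengths are weakly increasing: |u_1| ≤ |u_2| ≤ ⋯ ≤ |u_r|. (Equivalently, the sequence (Q_n)_{n≥1}, with empty members deleted, is the right length factorization of the free monoid C*.) -/

import Mathlib

def IsCode {A : Type*} (C : Set (FreeMonoid A)) : Prop :=
  (∀ c ∈ C, c ≠ 1) ∧
  ∀ l l' : List (FreeMonoid A),
    (∀ c ∈ l, c ∈ C) → (∀ c ∈ l', c ∈ C) → l.prod = l'.prod → l = l'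

def lazardZ {A : Type*} (C : Set (FreeMonoid A)) : ℕ → Set (FreeMonoid A)
  | 0 => ∅
  | 1 => C
  | (n + 2) =>
      {w | ∃ z ∈ lazardZ C (n + 1), z.length ≠ n + 1 ∧
        ∃ u ∈ Submonoid.closure
          {v | v ∈ lazardZ C (n + 1) ∧ v.length = n + 1}, w = z * u}

def lazardQ {A : Type*} (C : Set (FreeMonoid A)) (n : ℕ) : Set (FreeMonoid A) :=
  {w | w ∈ lazardZ C n ∧ w.length = n}

namespace LazardAux

variable {A : Type*} {C : Set (FreeMonoid A)}

lemma length_list_prod (l : List (FreeMonoid A)) :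
    l.prod.length = (l.map FreeMonoid.length).sum := by
  induction l with
  | nil => rfl
  | cons a t ih => simp [FreeMonoid.length_mul, ih]

lemma mem_lazardZ_succ {n : ℕ} (hn : 1 ≤ n) {w : FreeMonoid A} :
    w ∈ lazardZ C (n + 1) ↔
      ∃ z ∈ lazardZ C n, z.length ≠ n ∧
        ∃ u ∈ Submonoid.closure (lazardQ C n), w = z * u := by
  obtain ⟨m, rfl⟩ : ∃ m, n = m + 1 := ⟨n - 1, by omega⟩
  rfl

lemma mem_lazardQ_iff {n : ℕ} {w : FreeMonoid A} :
    w ∈ lazardQ C n ↔ w ∈ lazardZ C n ∧ w.length = n := Iff.rfl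

/-- Elements of `Q_m` for `m ≥ 1` are nonempty; a product of such equal to 1 empty list. -/
lemma eq_nil_of_prod_eq_one {l : List (FreeMonoid A)}
    (h : ∀ u ∈ l, ∃ m, 1 ≤ m ∧ u ∈ lazardQ C m) (hp : l.prod = 1) : l = [] := by
  cases l with
  | nil => rfl
  | cons a t =>
    exfalso
    obtain ⟨m, hm, _, hlen⟩ := h a (by simp)
    have := congrArg FreeMonoid.length hp
    rw [length_list_prod] at this
    simp [hlen] at this
    omega

/-- Every element of `Z_n` has length at least `n` (given the code hypothesis). -/
lemma length_ge (hC : IsCode C) : ∀ n, 1 ≤ n → ∀ z ∈ lazardZ C n, n ≤ z.length := by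
  intro n
  induction n with
  | zero => omega
  | succ n ih =>
    intro _ z hz
    rcases Nat.eq_or_lt_of_le (Nat.succ_le_succ (Nat.zero_le n)) with h1 | h1
    · -- n = 0, Z 1 = C
      have hn0 : n = 0 := by omega
      subst hn0
      have hz' : z ∈ C := hz
      have := hC.1 z hz'
      have : z.length ≠ 0 := fun h => this (FreeMonoid.length_eq_zero.mp h)
      omega
    · have hn : 1 ≤ n := by omega
      rw [mem_lazardZ_succ hn] at hz
      obtain ⟨x, hx, hxn, u, hu, rfl⟩ := hz
      have := ih hn x hx
      rw [FreeMonoid.length_mul]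
      omega

lemma one_not_mem_lazardZ (hC : IsCode C) {n : ℕ} (hn : 1 ≤ n) :
    (1 : FreeMonoid A) ∉ lazardZ C n := by
  intro h
  have := length_ge hC n hn 1 h
  simp [FreeMonoid.length_one] at this
  omega

/-- Length of a nontrivial element of the closure of `Z_n` is at least `n`. -/
lemma length_ge_of_mem_closure (hC : IsCode C) {n : ℕ} (hn : 1 ≤ n) {w : FreeMonoid A}
    (hw : w ∈ Submonoid.closure (lazardZ C n)) (hw1 : w ≠ 1) : n ≤ w.length := by
  obtain ⟨l, hl, rfl⟩ := Submonoid.exists_list_of_mem_closure hw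
  cases l with
  | nil => simp at hw1
  | cons a t =>
    have ha := length_ge hC n hn a (hl a (by simp))
    have : a.length ≤ (a :: t).prod.length := by
      rw [length_list_prod, List.map_cons, List.sum_cons]; omega
    omega

section Blocks

variable (C) (n : ℕ)

/-- A block: a nonempty list over `Z_n` whose head is not in `Q_n` and whose tail is in `Q_n`. -/
def IsBlock (b : List (FreeMonoid A)) : Prop :=
  ∃ h t, b = h :: t ∧ h ∈ lazardZ C n ∧ h.length ≠ n ∧ ∀ x ∈ t, x ∈ lazardQ C n

variable {C n}

lemma IsBlock.ne_nil {b} (hb : IsBlock C n b) : b ≠ [] := by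
  obtain ⟨h, t, rfl, _⟩ := hb; simp

lemma IsBlock.mem_Z {b} (hb : IsBlock C n b) : ∀ x ∈ b, x ∈ lazardZ C n := by
  obtain ⟨h, t, rfl, hh, _, ht⟩ := hb
  intro x hx
  rcases List.mem_cons.mp hx with rfl | hx
  · exact hh
  · exact (ht x hx).1

lemma flatten_head_not_Q {B : List (List (FreeMonoid A))}
    (hB : ∀ b ∈ B, IsBlock C n b) :
    B.flatten = [] ∨ ∃ h t, B.flatten = h :: t ∧ h.length ≠ n := by
  induction B with
  | nil => left; rfl
  | cons b B ih =>
    right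
    obtain ⟨h, t, rfl, _, hh, _⟩ := hB b (by simp)
    exact ⟨h, t ++ B.flatten, by simp, hh⟩

/-- Parsing, step 1: the `Q`-prefix is determined. -/
lemma parse_prefix : ∀ (k k' : List (FreeMonoid A)) (J J' : List (FreeMonoid A)),
    (∀ x ∈ k, x ∈ lazardQ C n) → (∀ x ∈ k', x ∈ lazardQ C n) →
    (∀ h t, J = h :: t → h.length ≠ n) → (∀ h t, J' = h :: t → h.length ≠ n) →
    k ++ J = k' ++ J' → k = k' ∧ J = J' := by
  intro k
  induction k with
  | nil =>
    intro k' J J' _ hk' hJ hJ' heq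
    cases k' with
    | nil => simpa using heq
    | cons a t =>
      exfalso
      simp only [List.nil_append, List.cons_append] at heq
      exact hJ a (t ++ J') heq (hk' a (by simp)).2
  | cons a t ih =>
    intro k' J J' hk hk' hJ hJ' heq
    cases k' with
    | nil =>
      exfalso
      simp only [List.cons_append, List.nil_append] at heq
      exact hJ' a (t ++ J) heq.symm (hk a (by simp)).2
    | cons a' t' =>
      simp only [List.cons_append, List.cons.injEq] at heq
      obtain ⟨rfl, heq⟩ := heq
      obtain ⟨h1, h2⟩ := ih t' J J' (fun x hx => hk x (by simp [hx]))
        (fun x hx => hk' x (by simp [hx])) hJ hJ' heq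
      exact ⟨by rw [h1], h2⟩

/-- Parsing, step 2: block decompositions are unique. -/
lemma parse_blocks : ∀ (B B' : List (List (FreeMonoid A))),
    (∀ b ∈ B, IsBlock C n b) → (∀ b ∈ B', IsBlock C n b) →
    B.flatten = B'.flatten → B = B' := by
  intro B
  induction B with
  | nil =>
    intro B' _ hB' heq
    cases B' with
    | nil => rfl
    | cons b B' =>
      exfalso
      have := (hB' b (by simp)).ne_nil
      cases b with
      | nil => exact this rfl
      | cons x s => simp at heq
  | cons b B ih =>
    intro B' hB hB' heq
    cases B' with
    | nil =>
      exfalso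
      have := (hB b (by simp)).ne_nil
      cases b with
      | nil => exact this rfl
      | cons x s => simp at heq
    | cons b' B'' =>
      obtain ⟨h, t, rfl, hhZ, hh, ht⟩ := hB b (by simp)
      obtain ⟨h', t', rfl, hhZ', hh', ht'⟩ := hB' b' (by simp)
      simp only [List.flatten_cons, List.cons_append, List.cons.injEq] at heq
      obtain ⟨rfl, heq⟩ := heq
      have hJ : ∀ a s, B.flatten = a :: s → a.length ≠ n := by
        intro a s has
        rcases flatten_head_not_Q (fun b hb => hB b (List.mem_cons_of_mem _ hb)) with h0 | ⟨a', s', h1, h2⟩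
        · rw [h0] at has; cases has
        · rw [h1] at has; cases has; exact h2
      have hJ' : ∀ a s, B''.flatten = a :: s → a.length ≠ n := by
        intro a s has
        rcases flatten_head_not_Q (fun b hb => hB' b (List.mem_cons_of_mem _ hb)) with h0 | ⟨a', s', h1, h2⟩
        · rw [h0] at has; cases has
        · rw [h1] at has; cases has; exact h2
      obtain ⟨h1, h2⟩ := parse_prefix t t' B.flatten B''.flatten ht ht' hJ hJ' heq
      have := ih B'' (fun b hb => hB b (List.mem_cons_of_mem _ hb)) (fun b hb => hB' b (List.mem_cons_of_mem _ hb)) h2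
      rw [h1, this]

/-- Every list over `Z_{n+1}` is the list of products of a list of blocks. -/
lemma blockify (hn : 1 ≤ n) :
    ∀ (m : List (FreeMonoid A)), (∀ y ∈ m, y ∈ lazardZ C (n + 1)) →
    ∃ B : List (List (FreeMonoid A)), (∀ b ∈ B, IsBlock C n b) ∧ B.map List.prod = m := by
  intro m
  induction m with
  | nil => exact fun _ => ⟨[], by simp, rfl⟩
  | cons y m ih =>
    intro hm
    obtain ⟨B, hB, hBm⟩ := ih (fun x hx => hm x (by simp [hx]))
    obtain ⟨z, hz, hzn, u, hu, rfl⟩ := (mem_lazardZ_succ hn).mp (hm y (by simp))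
    obtain ⟨q, hq, rfl⟩ := Submonoid.exists_list_of_mem_closure hu
    refine ⟨(z :: q) :: B, ?_, ?_⟩
    · intro b hb
      rcases List.mem_cons.mp hb with rfl | hb
      · exact ⟨z, q, rfl, hz, hzn, hq⟩
      · exact hB b hb
    · simp [hBm]

end Blocks

/-- The key splitting uniqueness: writing `w = (Qₙ-list).prod * (element of closure Z_{n+1})`
is unique, given `Z_n` is a code. -/
lemma split_unique {n : ℕ} (hn : 1 ≤ n) (hcode : IsCode (lazardZ C n))
    {k k' : List (FreeMonoid A)} {z z' : FreeMonoid A}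
    (hk : ∀ x ∈ k, x ∈ lazardQ C n) (hk' : ∀ x ∈ k', x ∈ lazardQ C n)
    (hz : z ∈ Submonoid.closure (lazardZ C (n + 1)))
    (hz' : z' ∈ Submonoid.closure (lazardZ C (n + 1)))
    (heq : k.prod * z = k'.prod * z') : k = k' ∧ z = z' := by
  obtain ⟨m, hm, rfl⟩ := Submonoid.exists_list_of_mem_closure hz
  obtain ⟨m', hm', rfl⟩ := Submonoid.exists_list_of_mem_closure hz'
  obtain ⟨B, hB, rfl⟩ := blockify hn m hm
  obtain ⟨B', hB', rfl⟩ := blockify hn m' hm'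
  have key : (k ++ B.flatten).prod = (k' ++ B'.flatten).prod := by
    simp only [List.prod_append, List.prod_flatten]
    exact heq
  have hlists : k ++ B.flatten = k' ++ B'.flatten := by
    apply hcode.2 _ _ _ _ key
    · intro c hc
      rcases List.mem_append.mp hc with hc | hc
      · exact (hk c hc).1
      · obtain ⟨b, hb, hcb⟩ := List.mem_flatten.mp hc
        exact (hB b hb).mem_Z c hcb
    · intro c hc
      rcases List.mem_append.mp hc with hc | hc
      · exact (hk' c hc).1
      · obtain ⟨b, hb, hcb⟩ := List.mem_flatten.mp hc
        exact (hB' b hb).mem_Z c hcb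
  have hJ : ∀ a s, B.flatten = a :: s → a.length ≠ n := by
    intro a s has
    rcases flatten_head_not_Q hB with h0 | ⟨a', s', h1, h2⟩
    · rw [h0] at has; cases has
    · rw [h1] at has; cases has; exact h2
  have hJ' : ∀ a s, B'.flatten = a :: s → a.length ≠ n := by
    intro a s has
    rcases flatten_head_not_Q hB' with h0 | ⟨a', s', h1, h2⟩
    · rw [h0] at has; cases has
    · rw [h1] at has; cases has; exact h2
  obtain ⟨h1, h2⟩ := parse_prefix k k' B.flatten B'.flatten hk hk' hJ hJ' hlists
  have hBB' := parse_blocks B B' hB hB' h2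
  subst hBB'
  exact ⟨h1, rfl⟩

/-- `Z_{n+1}` is a code, given `Z_n` is. -/
lemma code_succ (hC : IsCode C) {n : ℕ} (hn : 1 ≤ n) (hcode : IsCode (lazardZ C n)) :
    IsCode (lazardZ C (n + 1)) := by
  constructor
  · intro c hc h1
    have := length_ge hC (n + 1) (by omega) c hc
    rw [h1] at this
    simp [FreeMonoid.length_one] at this
  · intro l l' hl hl' heq
    obtain ⟨B, hB, hBl⟩ := blockify hn l hl
    obtain ⟨B', hB', hBl'⟩ := blockify hn l' hl'
    have key : B.flatten.prod = B'.flatten.prod := by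
      rw [List.prod_flatten, List.prod_flatten, hBl, hBl', heq]
    have hlists : B.flatten = B'.flatten := by
      apply hcode.2 _ _ _ _ key
      · intro c hc
        obtain ⟨b, hb, hcb⟩ := List.mem_flatten.mp hc
        exact (hB b hb).mem_Z c hcb
      · intro c hc
        obtain ⟨b, hb, hcb⟩ := List.mem_flatten.mp hc
        exact (hB' b hb).mem_Z c hcb
    have := parse_blocks B B' hB hB' hlists
    rw [← hBl, ← hBl', this]

/-- All `Z_n` (`n ≥ 1`) are codes. -/
lemma code_all (hC : IsCode C) : ∀ n, 1 ≤ n → IsCode (lazardZ C n) := by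
  intro n
  induction n with
  | zero => omega
  | succ n ih =>
    intro _
    rcases Nat.eq_zero_or_pos n with rfl | hn
    · exact hC
    · exact code_succ hC hn (ih hn)

/-- `Z_m ⊆ closure (Z_n)` for `1 ≤ n ≤ m`. -/
lemma Z_subset_closure {n : ℕ} (hn : 1 ≤ n) :
    ∀ m, n ≤ m → lazardZ C m ⊆ Submonoid.closure (lazardZ C n) := by
  intro m
  induction m with
  | zero => intro h; omega
  | succ m ih =>
    intro hm
    rcases Nat.lt_or_ge n (m + 1) with h | h
    · have hm1 : 1 ≤ m := by omega
      have hsub := ih (by omega)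
      have hcl : Submonoid.closure (lazardZ C m) ≤ Submonoid.closure (lazardZ C n) :=
        Submonoid.closure_le.mpr hsub
      intro w hw
      rw [mem_lazardZ_succ hm1] at hw
      obtain ⟨z, hz, _, u, hu, rfl⟩ := hw
      refine Submonoid.mul_mem _ (hcl (Submonoid.subset_closure hz)) (hcl ?_)
      refine Submonoid.closure_le.mpr ?_ hu
      intro v hv
      exact Submonoid.subset_closure hv.1
    · have : n = m + 1 := by omega
      subst this
      exact Submonoid.subset_closure

/-- Splitting existence at the list level. -/
lemma split_exists {n : ℕ} (hn : 1 ≤ n) :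
    ∀ L : List (FreeMonoid A), (∀ x ∈ L, x ∈ lazardZ C n) →
    ∃ k : List (FreeMonoid A), (∀ x ∈ k, x ∈ lazardQ C n) ∧
      ∃ z ∈ Submonoid.closure (lazardZ C (n + 1)), L.prod = k.prod * z := by
  intro L
  induction L with
  | nil => exact fun _ => ⟨[], by simp, 1, Submonoid.one_mem _, by simp⟩
  | cons a L ih =>
    intro hL
    obtain ⟨k, hk, z, hz, hprod⟩ := ih (fun x hx => hL x (by simp [hx]))
    by_cases ha : a.length = n
    · refine ⟨a :: k, ?_, z, hz, ?_⟩
      · intro x hx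
        rcases List.mem_cons.mp hx with h | hx
        · subst h; exact ⟨hL _ (by simp), ha⟩
        · exact hk x hx
      · simp [hprod, mul_assoc]
    · have hblock : a * k.prod ∈ lazardZ C (n + 1) := by
        rw [mem_lazardZ_succ hn]
        exact ⟨a, hL a (by simp), ha, k.prod,
          Submonoid.list_prod_mem _ (fun x hx => Submonoid.subset_closure (hk x hx)), rfl⟩
      refine ⟨[], by simp, (a * k.prod) * z,
        Submonoid.mul_mem _ (Submonoid.subset_closure hblock) hz, ?_⟩
      simp [hprod, mul_assoc]


lemma prod_length_Q {n : ℕ} {k : List (FreeMonoid A)}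
    (hk : ∀ x ∈ k, x ∈ lazardQ C n) : k.prod.length = n * k.length := by
  induction k with
  | nil => simp [FreeMonoid.length_one]
  | cons a t ih =>
    rw [List.prod_cons, FreeMonoid.length_mul, (hk a (by simp)).2,
      ih (fun x hx => hk x (List.mem_cons_of_mem _ hx)), List.length_cons, Nat.mul_succ]
    omega

lemma mem_le_prod_length {l : List (FreeMonoid A)} {x : FreeMonoid A} (hx : x ∈ l) :
    x.length ≤ l.prod.length := by
  rw [length_list_prod]
  exact List.single_le_sum (fun _ _ => Nat.zero_le _) _ (List.mem_map_of_mem hx)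

lemma pairwise_le_of_const {n : ℕ} {l : List ℕ} (h : ∀ x ∈ l, x = n) :
    l.Pairwise (· ≤ ·) := by
  induction l with
  | nil => exact List.Pairwise.nil
  | cons a t ih =>
    refine List.Pairwise.cons (fun b hb => ?_) (ih fun x hx => h x (List.mem_cons_of_mem _ hx))
    rw [h a (by simp), h b (List.mem_cons_of_mem _ hb)]

/-- Existence of the increasing factorization, by induction on `|w| + 1 - n`. -/
lemma ex (hC : IsCode C) : ∀ μ n, ∀ w : FreeMonoid A, 1 ≤ n → w.length + 1 - n ≤ μ →
    w ∈ Submonoid.closure (lazardZ C n) →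
    ∃ l : List (FreeMonoid A), (∀ u ∈ l, ∃ m, n ≤ m ∧ u ∈ lazardQ C m) ∧
      (l.map FreeMonoid.length).Pairwise (· ≤ ·) ∧ l.prod = w := by
  intro μ
  induction μ with
  | zero =>
    intro n w hn hμ hw
    by_cases hw1 : w = 1
    · exact ⟨[], by simp, by simp, hw1.symm⟩
    · have := length_ge_of_mem_closure hC hn hw hw1
      omega
  | succ μ ih =>
    intro n w hn hμ hw
    by_cases hw1 : w = 1
    · exact ⟨[], by simp, by simp, hw1.symm⟩
    have hwn : n ≤ w.length := length_ge_of_mem_closure hC hn hw hw1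
    obtain ⟨L, hL, rfl⟩ := Submonoid.exists_list_of_mem_closure hw
    obtain ⟨k, hk, z, hz, hprod⟩ := split_exists hn L hL
    have hlen : L.prod.length = k.prod.length + z.length := by
      rw [hprod, FreeMonoid.length_mul]
    cases k with
    | nil =>
      have hzw : z = L.prod := by simpa using hprod.symm
      obtain ⟨l, h1, h2, h3⟩ := ih (n + 1) z (by omega)
        (by rw [hzw]; omega) hz
      exact ⟨l, fun u hu => (h1 u hu).imp (fun m hm => ⟨by omega, hm.2⟩), h2,
        by rw [h3, hzw]⟩
    | cons a t =>
      have hkp : n ≤ (a :: t).prod.length := by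
        rw [prod_length_Q hk, List.length_cons, Nat.mul_succ]; omega
      obtain ⟨l', h1, h2, h3⟩ := ih (n + 1) z (by omega) (by omega) hz
      refine ⟨(a :: t) ++ l', ?_, ?_, ?_⟩
      · intro u hu
        rcases List.mem_append.mp hu with hu | hu
        · exact ⟨n, le_refl n, hk u hu⟩
        · exact (h1 u hu).imp (fun m hm => ⟨by omega, hm.2⟩)
      · rw [List.map_append]
        rw [List.pairwise_append]
        refine ⟨pairwise_le_of_const (n := n) (fun x hx => ?_), h2, ?_⟩
        · obtain ⟨u, hu, rfl⟩ := List.mem_map.mp hx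
          exact (hk u hu).2
        · intro x hx y hy
          obtain ⟨u, hu, rfl⟩ := List.mem_map.mp hx
          obtain ⟨v, hv, rfl⟩ := List.mem_map.mp hy
          obtain ⟨m, hm, hvQ⟩ := h1 v hv
          rw [(hk u hu).2, hvQ.2]
          omega
      · rw [List.prod_append, h3, hprod]

lemma dropWhile_head_not (p : FreeMonoid A → Bool) :
    ∀ (l : List (FreeMonoid A)) b t, l.dropWhile p = b :: t → p b = false := by
  intro l
  induction l with
  | nil => intro b t h; simp [List.dropWhile] at h
  | cons a l ih =>
    intro b t h
    by_cases hpa : p a = true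
    · rw [List.dropWhile_cons_of_pos hpa] at h
      exact ih b t h
    · rw [List.dropWhile_cons_of_neg hpa] at h
      cases h
      simpa using hpa

/-- Decomposition of an increasing `Q`-factorization into its `Qₙ`-prefix and the rest. -/
lemma decomp {n : ℕ} {l : List (FreeMonoid A)} (hn : 1 ≤ n)
    (hl : ∀ u ∈ l, ∃ m, n ≤ m ∧ u ∈ lazardQ C m)
    (hpair : (l.map FreeMonoid.length).Pairwise (· ≤ ·)) :
    ∃ k r : List (FreeMonoid A), l = k ++ r ∧ (∀ x ∈ k, x ∈ lazardQ C n) ∧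
      (∀ u ∈ r, ∃ m, n + 1 ≤ m ∧ u ∈ lazardQ C m) ∧
      (r.map FreeMonoid.length).Pairwise (· ≤ ·) ∧
      r.prod ∈ Submonoid.closure (lazardZ C (n + 1)) := by
  set p : FreeMonoid A → Bool := fun u => u.length == n with hp
  set k := l.takeWhile p with hkdef
  set r := l.dropWhile p with hrdef
  have hsplit : l = k ++ r := (List.takeWhile_append_dropWhile ..).symm
  have hkmem : ∀ x ∈ k, x ∈ l := fun x hx => hsplit ▸ List.mem_append_left _ hx
  have hrmem : ∀ x ∈ r, x ∈ l := fun x hx => hsplit ▸ List.mem_append_right _ hx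
  have hkQ : ∀ x ∈ k, x ∈ lazardQ C n := by
    intro x hx
    have hpx : p x = true := List.mem_takeWhile_imp hx
    have hxn : x.length = n := by simpa [hp] using hpx
    obtain ⟨m, hm, hxQ⟩ := hl x (hkmem x hx)
    have : m = n := by rw [← hxQ.2, hxn]
    exact this ▸ hxQ
  have hrpair : (r.map FreeMonoid.length).Pairwise (· ≤ ·) := by
    rw [hsplit, List.map_append, List.pairwise_append] at hpair
    exact hpair.2.1
  have hrQ : ∀ u ∈ r, ∃ m, n + 1 ≤ m ∧ u ∈ lazardQ C m := by
    intro u hu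
    obtain ⟨b, t, hr⟩ : ∃ b t, r = b :: t := by
      cases hcc : r with
      | nil => rw [hcc] at hu; simp at hu
      | cons b t => exact ⟨b, t, rfl⟩
    have hb : p b = false := dropWhile_head_not p l b t (by rw [← hrdef, hr])
    have hbn : b.length ≠ n := by simpa [hp] using hb
    obtain ⟨mb, hmb, hbQ⟩ := hl b (hrmem b (by rw [hr]; exact (List.mem_cons_self : b ∈ b :: t)))
    have hbge : n + 1 ≤ b.length := by have := hbQ.2; omega
    have hu' : u ∈ b :: t := by rw [← hr]; exact hu
    rcases List.mem_cons.mp hu' with h | h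
    · subst h
      obtain ⟨m, hm, huQ⟩ := hl u (hrmem u hu)
      refine ⟨m, ?_, huQ⟩
      have := huQ.2
      omega
    · obtain ⟨m, hm, huQ⟩ := hl u (hrmem u hu)
      have hble : b.length ≤ u.length := by
        have hcopy := hrpair
        rw [hr, List.map_cons, List.pairwise_cons] at hcopy
        exact hcopy.1 _ (List.mem_map_of_mem h)
      refine ⟨m, ?_, huQ⟩
      have hum := huQ.2
      omega
  refine ⟨k, r, hsplit, hkQ, hrQ, hrpair, ?_⟩
  refine Submonoid.list_prod_mem _ (fun x hx => ?_)
  obtain ⟨m, hm, hxQ⟩ := hrQ x hx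
  exact Z_subset_closure (by omega) m hm hxQ.1

/-- Uniqueness of the increasing factorization. -/
lemma un (hC : IsCode C) : ∀ μ n, ∀ l l' : List (FreeMonoid A), 1 ≤ n →
    l.prod.length + 1 - n ≤ μ →
    (∀ u ∈ l, ∃ m, n ≤ m ∧ u ∈ lazardQ C m) →
    (∀ u ∈ l', ∃ m, n ≤ m ∧ u ∈ lazardQ C m) →
    (l.map FreeMonoid.length).Pairwise (· ≤ ·) →
    (l'.map FreeMonoid.length).Pairwise (· ≤ ·) →
    l.prod = l'.prod → l = l' := by
  intro μ
  induction μ with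
  | zero =>
    intro n l l' hn hμ hl hl' _ _ heq
    have hlnil : l = [] := by
      cases hle : l with
      | nil => rfl
      | cons a t =>
        exfalso
        obtain ⟨m, hm, haQ⟩ := hl a (hle ▸ (List.mem_cons_self : a ∈ a :: t))
        have h1 : a.length ≤ l.prod.length := mem_le_prod_length (hle ▸ (List.mem_cons_self : a ∈ a :: t))
        rw [haQ.2] at h1
        omega
    subst hlnil
    exact (eq_nil_of_prod_eq_one
      (fun u hu => (hl' u hu).imp fun m hm => ⟨by omega, hm.2⟩) heq.symm).symm
  | succ μ ih =>
    intro n l l' hn hμ hl hl' hpair hpair' heq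
    obtain ⟨k, r, hlkr, hkQ, hrQ, hrpair, hrcl⟩ := decomp hn hl hpair
    obtain ⟨k', r', hlkr', hkQ', hrQ', hrpair', hrcl'⟩ := decomp hn hl' hpair'
    have hprods : k.prod * r.prod = k'.prod * r'.prod := by
      rw [← List.prod_append, ← List.prod_append, ← hlkr, ← hlkr', heq]
    obtain ⟨hkk, hrr⟩ := split_unique hn (code_all hC n hn) hkQ hkQ' hrcl hrcl' hprods
    cases hr : r with
    | nil =>
      have hr'nil : r' = [] := by
        apply eq_nil_of_prod_eq_one (fun u hu => (hrQ' u hu).imp fun m hm => ⟨by omega, hm.2⟩)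
        rw [← hrr, hr]; rfl
      rw [hlkr, hlkr', hkk, hr, hr'nil]
    | cons b t =>
      have hbmem : b ∈ r := by rw [hr]; exact (List.mem_cons_self : b ∈ b :: t)
      obtain ⟨mb, hmb, hbQ⟩ := hrQ b hbmem
      have hrp_ge : n + 1 ≤ r.prod.length := by
        have := mem_le_prod_length hbmem
        rw [hbQ.2] at this
        omega
      have hwlen : l.prod.length = k.prod.length + r.prod.length := by
        rw [hlkr, List.prod_append, FreeMonoid.length_mul]
      have hrec : r = r' := by
        apply ih (n + 1) r r' (by omega) (by omega) hrQ hrQ' hrpair hrpair' hrr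
      rw [hlkr, hlkr', hkk, hrec]

end LazardAux

theorem right_length_factorization {A : Type*} (C : Set (FreeMonoid A))
    (hC : IsCode C) (w : FreeMonoid A) (hw : w ∈ Submonoid.closure C) :
    ∃! l : List (FreeMonoid A),
      (∀ u ∈ l, ∃ n, 1 ≤ n ∧ u ∈ lazardQ C n) ∧
      (l.map FreeMonoid.length).Chain' (· ≤ ·) ∧
      l.prod = w := by
  have hw1 : w ∈ Submonoid.closure (lazardZ C 1) := hw
  obtain ⟨l, h1, h2, h3⟩ := LazardAux.ex hC (w.length + 1) 1 w le_rfl (by omega) hw1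
  refine ⟨l, ⟨h1, List.isChain_iff_pairwise.mpr h2, h3⟩, ?_⟩
  rintro l' ⟨h1', h2', h3'⟩
  exact LazardAux.un hC (w.length + 1) 1 l' l le_rfl (by rw [h3']; omega) h1' h1
    (List.isChain_iff_pairwise.mp h2') h2 (by rw [h3, h3'])
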